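/- Sturm-type comparison (second interval): under the integral Wronskian identity W(z) = W(f) + C∫_f^z M₁M₂Φ dξ with C > 0, Φ > 0, suppose M₁ > 0 on (a,c], M₂(c)=0, M₂'(c)<0, M₂<0 on (c,e), and lim_{z→e⁻} M₁(z) = lim_{z→e⁻} M₂(z) = 0 with lim_{z→e⁻} W(z) finite equal to 0. Then M₁ > 0 on (c,e). -/

import Mathlib

open Set Filter Topology intervalIntegral

set_option maxHeartbeats 1000000 in
/-- Sturm-type comparison lemma on the second interval. -/
theorem stmt_11 (a c e : ℝ) (hac : a < c) (hce : c < e)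
    (M₁ M₂ Φ : ℝ → ℝ) (C : ℝ) (hC : C > 0)
    (hΦ : Continuous Φ) (hΦpos : ∀ z, Φ z > 0)
    (hM₁ : ∀ z ∈ Ioo a e, DifferentiableAt ℝ M₁ z)
    (hM₂ : ∀ z ∈ Ioo a e, DifferentiableAt ℝ M₂ z)
    (hW : ∀ z₁ ∈ Ioo a e, ∀ z₂ ∈ Ioo a e,
      (deriv M₁ z₂ * M₂ z₂ - deriv M₂ z₂ * M₁ z₂)
        - (deriv M₁ z₁ * M₂ z₁ - deriv M₂ z₁ * M₁ z₁) =
      C * ∫ ξ in z₁..z₂, M₁ ξ * M₂ ξ * Φ ξ)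
    (hM₁pos : ∀ z ∈ Ioc a c, M₁ z > 0)
    (hM₂c : M₂ c = 0) (hM₂'c : deriv M₂ c < 0)
    (hM₂neg : ∀ z ∈ Ioo c e, M₂ z < 0)
    (hlim₁ : Tendsto M₁ (𝓝[<] e) (𝓝 0))
    (hlim₂ : Tendsto M₂ (𝓝[<] e) (𝓝 0))
    (hlimW : Tendsto (fun z => deriv M₁ z * M₂ z - deriv M₂ z * M₁ z)
      (𝓝[<] e) (𝓝 0)) :
    ∀ z ∈ Ioo c e, M₁ z > 0 := by
  set W : ℝ → ℝ := fun z => deriv M₁ z * M₂ z - deriv M₂ z * M₁ z with hWdef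
  set g : ℝ → ℝ := fun z => M₁ z * M₂ z * Φ z with hgdef
  have hae : a < e := lt_trans hac hce
  have hsubce : Ioo c e ⊆ Ioo a e := fun x hx => ⟨lt_trans hac hx.1, hx.2⟩
  have hgcont : ContinuousOn g (Ioo a e) := fun y hy =>
    (((hM₁ y hy).continuousAt.continuousWithinAt.mul
      (hM₂ y hy).continuousAt.continuousWithinAt).mul (hΦ.continuousOn y hy))
  have hWint : ∀ z₁ ∈ Ioo a e, ∀ z₂ ∈ Ioo a e,
      W z₂ - W z₁ = C * ∫ ξ in z₁..z₂, g ξ := by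
    intro z₁ h₁ z₂ h₂
    simpa [hWdef, hgdef] using hW z₁ h₁ z₂ h₂
  have hInt : ∀ p ∈ Ioo a e, ∀ q ∈ Ioo a e,
      IntervalIntegrable g MeasureTheory.volume p q := fun p hp q hq =>
    (hgcont.mono ((Set.ordConnected_Ioo).uIcc_subset hp hq)).intervalIntegrable
  have hWder : ∀ z ∈ Ioo a e, HasDerivAt W (C * g z) z := by
    intro z hz
    have h1 : HasDerivAt (fun y => ∫ ξ in z..y, g ξ) (g z) z :=
      intervalIntegral.integral_hasDerivAt_right (hInt z hz z hz)
        (hgcont.stronglyMeasurableAtFilter isOpen_Ioo z hz)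
        (hgcont.continuousAt (isOpen_Ioo.mem_nhds hz))
    have h2 : HasDerivAt (fun y => W z + C * ∫ ξ in z..y, g ξ) (C * g z) z :=
      (h1.const_mul C).const_add (W z)
    apply h2.congr_of_eventuallyEq
    filter_upwards [isOpen_Ioo.mem_nhds hz] with y hy
    have := hWint z hz y hy
    linarith
  -- strict increase of W over intervals where g > 0
  have hWlt : ∀ p ∈ Ioo a e, ∀ q ∈ Ioo a e, p < q →
      (∀ x ∈ Ioo p q, 0 < g x) → W p < W q := by
    intro p hp q hq hpq hgpos
    have h := hWint p hp q hq
    have hI : 0 < ∫ ξ in p..q, g ξ :=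
      intervalIntegral.intervalIntegral_pos_of_pos_on (hInt p hp q hq) hgpos hpq
    nlinarith
  -- strict decrease of W over intervals where g < 0
  have hWgt : ∀ p ∈ Ioo a e, ∀ q ∈ Ioo a e, p < q →
      (∀ x ∈ Ioo p q, g x < 0) → W q < W p := by
    intro p hp q hq hpq hgneg
    have h := hWint p hp q hq
    have hI : 0 < ∫ ξ in p..q, (fun x => -g x) ξ :=
      intervalIntegral.intervalIntegral_pos_of_pos_on ((hInt p hp q hq).neg)
        (fun x hx => by simpa using (hgneg x hx)) hpq
    rw [intervalIntegral.integral_neg] at hI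
    nlinarith
  -- weak increase of W over intervals where g ≥ 0
  have hWle : ∀ p ∈ Ioo a e, ∀ q ∈ Ioo a e, p ≤ q →
      (∀ x ∈ Icc p q, 0 ≤ g x) → W p ≤ W q := by
    intro p hp q hq hpq hgnn
    have h := hWint p hp q hq
    have hI : 0 ≤ ∫ ξ in p..q, g ξ := intervalIntegral.integral_nonneg hpq hgnn
    nlinarith
  have hlimW' : Tendsto W (𝓝[<] e) (𝓝 0) := hlimW
  have hcae : c ∈ Ioo a e := ⟨hac, hce⟩
  have hM₁cpos : 0 < M₁ c := hM₁pos c ⟨hac, le_refl c⟩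
  -- Stage A: M₁ ≥ 0 on (c, e)
  have stageA : ∀ z ∈ Ioo c e, 0 ≤ M₁ z := by
    by_contra hcon
    push_neg at hcon
    obtain ⟨z₀, hz₀, hz₀neg⟩ := hcon
    -- find z₁ ∈ (c, z₀) with M₁ z₁ > 0
    have hevpos : ∀ᶠ x in 𝓝 c, 0 < M₁ x :=
      (hM₁ c hcae).continuousAt.eventually (eventually_gt_nhds hM₁cpos)
    have hev2 : Ioo c z₀ ∈ 𝓝[>] c := Ioo_mem_nhdsGT_of_mem ⟨le_refl c, hz₀.1⟩
    have hevc : ∀ᶠ x in 𝓝[>] c, 0 < M₁ x ∧ x ∈ Ioo c z₀ :=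
      (hevpos.filter_mono nhdsWithin_le_nhds).and
        (Filter.eventually_of_mem hev2 (fun x hx => hx))
    obtain ⟨z₁, hz₁pos, hz₁Ioo⟩ := hevc.exists
    have hIccsub : Icc z₁ z₀ ⊆ Ioo a e := fun x hx =>
      ⟨lt_trans hac (lt_of_lt_of_le hz₁Ioo.1 hx.1), lt_of_le_of_lt hx.2 hz₀.2⟩
    have hIccsubce : Icc z₁ z₀ ⊆ Ioo c e := fun x hx =>
      ⟨lt_of_lt_of_le hz₁Ioo.1 hx.1, lt_of_le_of_lt hx.2 hz₀.2⟩
    -- p = last point in [z₁, z₀] where M₁ ≥ 0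
    set S : Set ℝ := {x ∈ Icc z₁ z₀ | 0 ≤ M₁ x} with hSdef
    have hScl : IsClosed S := by
      have : S = Icc z₁ z₀ ∩ M₁ ⁻¹' (Ici 0) := by ext x; simp [hSdef, and_comm]
      rw [this]
      exact ContinuousOn.preimage_isClosed_of_isClosed
        (fun x hx => (hM₁ x (hIccsub hx)).continuousAt.continuousWithinAt)
        isClosed_Icc isClosed_Ici
    have hScpt : IsCompact S :=
      isCompact_Icc.of_isClosed_subset hScl (sep_subset _ _)
    have hSne : S.Nonempty := ⟨z₁, ⟨le_refl z₁, le_of_lt hz₁Ioo.2⟩, le_of_lt hz₁pos⟩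
    set p := sSup S with hpdef
    have hpS : p ∈ S := hScpt.sSup_mem hSne
    obtain ⟨⟨hz₁p, hpz₀⟩, hM₁pnn⟩ := hpS
    have hpce : p ∈ Ioo c e := hIccsubce ⟨hz₁p, hpz₀⟩
    have hpae : p ∈ Ioo a e := hIccsub ⟨hz₁p, hpz₀⟩
    have hpltz₀ : p < z₀ := lt_of_le_of_ne hpz₀ (fun h => by rw [h] at hM₁pnn; linarith)
    have hneg1 : ∀ x ∈ Ioc p z₀, M₁ x < 0 := by
      intro x hx
      by_contra h
      push_neg at h
      have hxS : x ∈ S := ⟨⟨le_of_lt (lt_of_le_of_lt hz₁p hx.1), hx.2⟩, h⟩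
      exact absurd (le_csSup hScpt.bddAbove hxS) (not_le.mpr hx.1)
    have hM₁p : M₁ p = 0 := by
      refine le_antisymm ?_ hM₁pnn
      by_contra h
      push_neg at h
      have hevp : ∀ᶠ x in 𝓝 p, 0 < M₁ x :=
        (hM₁ p hpae).continuousAt.eventually (eventually_gt_nhds h)
      have hev2p : Ioo p z₀ ∈ 𝓝[>] p := Ioo_mem_nhdsGT_of_mem ⟨le_refl p, hpltz₀⟩
      obtain ⟨x, hx1, hx2⟩ :=
        ((hevp.filter_mono nhdsWithin_le_nhds).and
          (Filter.eventually_of_mem hev2p (fun x hx => hx))).exists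
      exact absurd hx1 (not_lt.mpr (le_of_lt (hneg1 x ⟨hx2.1, le_of_lt hx2.2⟩)))
    -- deriv M₁ p ≤ 0
    have hderp : deriv M₁ p ≤ 0 := by
      have hd := (hM₁ p hpae).hasDerivAt
      rw [hasDerivAt_iff_tendsto_slope] at hd
      have hd' : Tendsto (slope M₁ p) (𝓝[>] p) (𝓝 (deriv M₁ p)) :=
        hd.mono_left (nhdsWithin_mono p (fun x hx => ne_of_gt hx))
      refine le_of_tendsto hd' ?_
      filter_upwards [Ioo_mem_nhdsGT_of_mem ⟨le_refl p, hpltz₀⟩] with x hx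
      rw [slope_def_field]
      have h1 : M₁ x < 0 := hneg1 x ⟨hx.1, le_of_lt hx.2⟩
      rw [hM₁p]
      apply div_nonpos_of_nonpos_of_nonneg <;> [skip; linarith [hx.1]]
      linarith
    have hWp : 0 ≤ W p := by
      have : W p = deriv M₁ p * M₂ p := by simp [hWdef, hM₁p]
      rw [this]
      exact mul_nonneg_of_nonpos_of_nonpos hderp (le_of_lt (hM₂neg p hpce))
    -- g is positive where M₁ < 0 in (c,e)
    have hgposneg : ∀ x ∈ Ioo c e, M₁ x < 0 → 0 < g x := by
      intro x hx h1
      exact mul_pos (mul_pos_of_neg_of_neg h1 (hM₂neg x hx)) (hΦpos x)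
    by_cases hex : ∃ x ∈ Ioo z₀ e, 0 ≤ M₁ x
    · obtain ⟨x₂, hx₂mem, hx₂nn⟩ := hex
      have hIcc2sub : Icc z₀ x₂ ⊆ Ioo a e := fun x hx =>
        ⟨lt_trans hac (lt_of_lt_of_le hz₀.1 hx.1), lt_of_le_of_lt hx.2 hx₂mem.2⟩
      have hIcc2subce : Icc z₀ x₂ ⊆ Ioo c e := fun x hx =>
        ⟨lt_of_lt_of_le hz₀.1 hx.1, lt_of_le_of_lt hx.2 hx₂mem.2⟩
      set T : Set ℝ := {x ∈ Icc z₀ x₂ | 0 ≤ M₁ x} with hTdef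
      have hTcl : IsClosed T := by
        have : T = Icc z₀ x₂ ∩ M₁ ⁻¹' (Ici 0) := by ext x; simp [hTdef, and_comm]
        rw [this]
        exact ContinuousOn.preimage_isClosed_of_isClosed
          (fun x hx => (hM₁ x (hIcc2sub hx)).continuousAt.continuousWithinAt)
          isClosed_Icc isClosed_Ici
      have hTcpt : IsCompact T :=
        isCompact_Icc.of_isClosed_subset hTcl (sep_subset _ _)
      have hTne : T.Nonempty := ⟨x₂, ⟨le_of_lt hx₂mem.1, le_refl x₂⟩, hx₂nn⟩
      set q := sInf T with hqdef
      have hqT : q ∈ T := hTcpt.sInf_mem hTne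
      obtain ⟨⟨hz₀q, hqx₂⟩, hM₁qnn⟩ := hqT
      have hqae : q ∈ Ioo a e := hIcc2sub ⟨hz₀q, hqx₂⟩
      have hqce : q ∈ Ioo c e := hIcc2subce ⟨hz₀q, hqx₂⟩
      have hz₀ltq : z₀ < q := lt_of_le_of_ne hz₀q (fun h => by rw [← h] at hM₁qnn; linarith)
      have hneg2 : ∀ x ∈ Ico z₀ q, M₁ x < 0 := by
        intro x hx
        by_contra h
        push_neg at h
        have hxT : x ∈ T := ⟨⟨hx.1, le_of_lt (lt_of_lt_of_le hx.2 hqx₂)⟩, h⟩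
        exact absurd (csInf_le hTcpt.bddBelow hxT) (not_le.mpr hx.2)
      have hnegpq : ∀ x ∈ Ioo p q, M₁ x < 0 := by
        intro x hx
        rcases le_or_gt x z₀ with h | h
        · exact hneg1 x ⟨hx.1, h⟩
        · exact hneg2 x ⟨le_of_lt h, hx.2⟩
      have hM₁q : M₁ q = 0 := by
        refine le_antisymm ?_ hM₁qnn
        have hd : Tendsto M₁ (𝓝[<] q) (𝓝 (M₁ q)) :=
          ((hM₁ q hqae).continuousAt.tendsto).mono_left nhdsWithin_le_nhds
        refine le_of_tendsto hd ?_
        filter_upwards [Ioo_mem_nhdsLT_of_mem ⟨hz₀ltq, le_refl q⟩] with x hx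
        exact le_of_lt (hneg2 x ⟨le_of_lt hx.1, hx.2⟩)
      have hderq : 0 ≤ deriv M₁ q := by
        have hd := (hM₁ q hqae).hasDerivAt
        rw [hasDerivAt_iff_tendsto_slope] at hd
        have hd' : Tendsto (slope M₁ q) (𝓝[<] q) (𝓝 (deriv M₁ q)) :=
          hd.mono_left (nhdsWithin_mono q (fun x hx => ne_of_lt hx))
        refine ge_of_tendsto hd' ?_
        filter_upwards [Ioo_mem_nhdsLT_of_mem ⟨hz₀ltq, le_refl q⟩] with x hx
        rw [slope_def_field, hM₁q]
        have h1 : M₁ x < 0 := hneg2 x ⟨le_of_lt hx.1, hx.2⟩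
        have h2 : x - q < 0 := by linarith [hx.2]
        apply le_of_lt
        apply div_pos_of_neg_of_neg <;> linarith
      have hWq : W q ≤ 0 := by
        have : W q = deriv M₁ q * M₂ q := by simp [hWdef, hM₁q]
        rw [this]
        exact mul_nonpos_iff.mpr (Or.inl ⟨hderq, le_of_lt (hM₂neg q hqce)⟩)
      have hlt : W p < W q := by
        refine hWlt p hpae q hqae (lt_trans hpltz₀ hz₀ltq) ?_
        intro x hx
        have hxce : x ∈ Ioo c e := ⟨lt_trans hpce.1 hx.1, lt_trans hx.2 hqce.2⟩
        exact hgposneg x hxce (hnegpq x hx)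
      linarith
    · push_neg at hex
      have hz₀ae : z₀ ∈ Ioo a e := hsubce hz₀
      have hnegall : ∀ x ∈ Ioo p e, M₁ x < 0 := by
        intro x hx
        rcases le_or_gt x z₀ with h | h
        · exact hneg1 x ⟨hx.1, h⟩
        · exact hex x ⟨h, hx.2⟩
      have h1 : W p < W z₀ := by
        refine hWlt p hpae z₀ hz₀ae hpltz₀ ?_
        intro x hx
        have hxce : x ∈ Ioo c e := ⟨lt_trans hpce.1 hx.1, lt_trans hx.2 hz₀.2⟩
        exact hgposneg x hxce (hneg1 x ⟨hx.1, le_of_lt hx.2⟩)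
      have h2 : ∀ z ∈ Ioo z₀ e, W z₀ ≤ W z := by
        intro z hz
        refine hWle z₀ hz₀ae z (hsubce ⟨lt_trans hz₀.1 hz.1, hz.2⟩) (le_of_lt hz.1) ?_
        intro x hx
        have hxpe : x ∈ Ioo p e := ⟨lt_of_lt_of_le hpltz₀ hx.1, lt_of_le_of_lt hx.2 hz.2⟩
        have hxce : x ∈ Ioo c e := ⟨lt_trans hpce.1 hxpe.1, hxpe.2⟩
        exact le_of_lt (hgposneg x hxce (hnegall x hxpe))
      have h3 : W z₀ ≤ 0 := by
        refine ge_of_tendsto hlimW' ?_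
        filter_upwards [Ioo_mem_nhdsLT_of_mem ⟨hz₀.2, le_refl e⟩] with x hx
        exact h2 x hx
      linarith
  -- Stage B: M₁ ≠ 0 on (c, e)
  intro z hz
  by_contra hM₁z
  push_neg at hM₁z
  -- d = first zero of M₁ in (c, z]
  have hzae : z ∈ Ioo a e := hsubce hz
  have hIccsub : Icc c z ⊆ Ioo a e := fun x hx =>
    ⟨lt_of_lt_of_le hac hx.1, lt_of_le_of_lt hx.2 hz.2⟩
  set D : Set ℝ := {x ∈ Icc c z | M₁ x ≤ 0} with hDdef
  have hDcl : IsClosed D := by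
    have : D = Icc c z ∩ M₁ ⁻¹' (Iic 0) := by ext x; simp [hDdef, and_comm]
    rw [this]
    exact ContinuousOn.preimage_isClosed_of_isClosed
      (fun x hx => (hM₁ x (hIccsub hx)).continuousAt.continuousWithinAt)
      isClosed_Icc isClosed_Iic
  have hDcpt : IsCompact D := isCompact_Icc.of_isClosed_subset hDcl (sep_subset _ _)
  have hDne : D.Nonempty := ⟨z, ⟨le_of_lt hz.1, le_refl z⟩, hM₁z⟩
  set d := sInf D with hddef
  have hdD : d ∈ D := hDcpt.sInf_mem hDne
  obtain ⟨⟨hcd, hdz⟩, hM₁dnp⟩ := hdD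
  have hcltd : c < d := lt_of_le_of_ne hcd (fun h => by rw [← h] at hM₁dnp; linarith)
  have hdce : d ∈ Ioo c e := ⟨hcltd, lt_of_le_of_lt hdz hz.2⟩
  have hdae : d ∈ Ioo a e := hsubce hdce
  have hM₁d : M₁ d = 0 := le_antisymm hM₁dnp (stageA d hdce)
  have hposcd : ∀ x ∈ Ioo c d, 0 < M₁ x := by
    intro x hx
    by_contra h
    push_neg at h
    have hxD : x ∈ D := ⟨⟨le_of_lt hx.1, le_of_lt (lt_of_lt_of_le hx.2 hdz)⟩, h⟩
    exact absurd (csInf_le hDcpt.bddBelow hxD) (not_le.mpr hx.2)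
  -- deriv M₁ d = 0 since d is a local min
  have hderd : deriv M₁ d = 0 := by
    have hmin : IsLocalMin M₁ d := by
      filter_upwards [isOpen_Ioo.mem_nhds hdce] with x hx
      rw [hM₁d]
      exact stageA x hx
    exact hmin.deriv_eq_zero
  have hWd0 : W d = 0 := by simp [hWdef, hM₁d, hderd]
  -- W > 0 on (c, d)
  have hWpos : ∀ x ∈ Ioo c d, 0 < W x := by
    intro x hx
    have hxce : x ∈ Ioo c e := ⟨hx.1, lt_trans hx.2 hdce.2⟩
    have hxae : x ∈ Ioo a e := hsubce hxce
    have : W d < W x := by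
      refine hWgt x hxae d hdae hx.2 ?_
      intro y hy
      have hyce : y ∈ Ioo c e := ⟨lt_trans hx.1 hy.1, lt_trans hy.2 hdce.2⟩
      have hy1 : 0 < M₁ y := hposcd y ⟨lt_trans hx.1 hy.1, hy.2⟩
      exact mul_neg_of_neg_of_pos (mul_neg_of_pos_of_neg hy1 (hM₂neg y hyce)) (hΦpos y)
    linarith [hWd0]
  set d₁ : ℝ := (c + d) / 2 with hd₁def
  have hd₁ : d₁ ∈ Ioo c d := ⟨by simp [hd₁def]; linarith, by simp [hd₁def]; linarith⟩
  have hKsubcd : Icc d₁ d ⊆ Ioo c e := fun x hx =>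
    ⟨lt_of_lt_of_le hd₁.1 hx.1, lt_of_le_of_lt hx.2 hdce.2⟩
  have hKae : Icc d₁ d ⊆ Ioo a e := fun x hx => hsubce (hKsubcd hx)
  -- W ≥ 0 on [d₁, d]
  have hWnn : ∀ x ∈ Icc d₁ d, 0 ≤ W x := by
    intro x hx
    rcases eq_or_lt_of_le hx.2 with h | h
    · rw [h, hWd0]
    · exact le_of_lt (hWpos x ⟨lt_of_lt_of_le hd₁.1 hx.1, h⟩)
  -- the ratio r = M₁ / M₂
  set r : ℝ → ℝ := fun y => M₁ y / M₂ y with hrdef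
  have hrd : r d = 0 := by simp [hrdef, hM₁d]
  have hrnp : ∀ x ∈ Icc d₁ d, r x ≤ 0 := by
    intro x hx
    have hxce : x ∈ Ioo c e := hKsubcd hx
    exact div_nonpos_of_nonneg_of_nonpos (stageA x hxce) (le_of_lt (hM₂neg x hxce))
  have hrd₁ : r d₁ < 0 := by
    have hxce : d₁ ∈ Ioo c e := hKsubcd ⟨le_refl d₁, le_of_lt hd₁.2⟩
    exact div_neg_of_pos_of_neg (hposcd d₁ hd₁) (hM₂neg d₁ hxce)
  -- compact bounds on K = Icc d₁ d
  have hd₁led : d₁ ≤ d := le_of_lt hd₁.2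
  have hKne : (Icc d₁ d).Nonempty := ⟨d, hd₁led, le_refl d⟩
  have hM₂sqcont : ContinuousOn (fun x => (M₂ x) ^ 2) (Icc d₁ d) := fun x hx =>
    ((hM₂ x (hKae hx)).continuousAt.continuousWithinAt).pow 2
  obtain ⟨xm, hxmK, hxmmin⟩ := isCompact_Icc.exists_isMinOn hKne hM₂sqcont
  obtain ⟨xM, hxMK, hxMmax⟩ := isCompact_Icc.exists_isMaxOn hKne hM₂sqcont
  obtain ⟨xΦ, hxΦK, hxΦmax⟩ := isCompact_Icc.exists_isMaxOn hKne
    (hΦ.continuousOn : ContinuousOn Φ (Icc d₁ d))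
  set m2 : ℝ := (M₂ xm) ^ 2 with hm2def
  set b2 : ℝ := (M₂ xM) ^ 2 with hb2def
  set b3 : ℝ := Φ xΦ with hb3def
  have hm2pos : 0 < m2 := by
    have := hM₂neg xm (hKsubcd hxmK)
    rw [hm2def, sq]
    exact mul_pos_of_neg_of_neg this this
  have hm2le : ∀ x ∈ Icc d₁ d, m2 ≤ (M₂ x) ^ 2 := fun x hx => hxmmin hx
  have hb2ge : ∀ x ∈ Icc d₁ d, (M₂ x) ^ 2 ≤ b2 := fun x hx => hxMmax hx
  have hb3ge : ∀ x ∈ Icc d₁ d, Φ x ≤ b3 := fun x hx => hxΦmax hx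
  have hb3pos : 0 < b3 := lt_of_lt_of_le (hΦpos d) (hb3ge d ⟨hd₁led, le_refl d⟩)
  have hb2pos : 0 < b2 := lt_of_lt_of_le hm2pos (hb2ge xm hxmK)
  set L : ℝ := max (C * (b2 * b3)) (1 / m2) with hLdef
  have hL1 : C * (b2 * b3) ≤ L := le_max_left _ _
  have hL2 : 1 / m2 ≤ L := le_max_right _ _
  have hLpos : 0 < L := lt_of_lt_of_le (by positivity) hL1
  -- u = W - r and its derivative
  set u : ℝ → ℝ := fun y => W y - r y with hudef
  have hu_der : ∀ x ∈ Ioo c e, HasDerivAt u (C * g x - W x / (M₂ x) ^ 2) x := by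
    intro x hx
    have hxae : x ∈ Ioo a e := hsubce hx
    have hM₂x : M₂ x ≠ 0 := ne_of_lt (hM₂neg x hx)
    have hr : HasDerivAt r ((deriv M₁ x * M₂ x - M₁ x * deriv M₂ x) / (M₂ x) ^ 2) x :=
      (hM₁ x hxae).hasDerivAt.div (hM₂ x hxae).hasDerivAt hM₂x
    have hr' : HasDerivAt r (W x / (M₂ x) ^ 2) x := by
      convert hr using 2
      simp [hWdef]
      ring
    exact (hWder x hxae).sub hr'
  -- key differential inequality on (d₁, d)
  have hkey : ∀ x ∈ Ioo d₁ d, 0 ≤ C * g x - W x / (M₂ x) ^ 2 + L * u x := by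
    intro x hx
    have hxK : x ∈ Icc d₁ d := ⟨le_of_lt hx.1, le_of_lt hx.2⟩
    have hxce : x ∈ Ioo c e := hKsubcd hxK
    have hM₂x : M₂ x ≠ 0 := ne_of_lt (hM₂neg x hxce)
    have hrx : r x ≤ 0 := hrnp x hxK
    have hWx : 0 ≤ W x := hWnn x hxK
    have hgr : C * g x = C * ((M₂ x) ^ 2 * Φ x) * r x := by
      rw [hgdef, hrdef]
      field_simp
    have hΦx : 0 < Φ x := hΦpos x
    have hsq : 0 < (M₂ x) ^ 2 := lt_of_lt_of_le hm2pos (hm2le x hxK)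
    have h1 : C * ((M₂ x) ^ 2 * Φ x) ≤ L := by
      refine le_trans ?_ hL1
      have := mul_le_mul (hb2ge x hxK) (hb3ge x hxK) (le_of_lt hΦx) (le_of_lt hb2pos)
      nlinarith
    have h2 : L * r x ≤ C * ((M₂ x) ^ 2 * Φ x) * r x :=
      mul_le_mul_of_nonpos_right h1 hrx
    have h3 : W x / (M₂ x) ^ 2 ≤ L * W x := by
      have hd1 : W x / (M₂ x) ^ 2 ≤ W x / m2 :=
        div_le_div_of_nonneg_left hWx hm2pos (hm2le x hxK)
      have hd2 : W x / m2 = W x * (1 / m2) := by ring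
      have hd3 : W x * (1 / m2) ≤ W x * L := mul_le_mul_of_nonneg_left hL2 hWx
      linarith
    simp only [hudef, hgr]
    linarith [h2, h3]
  -- v = u * exp(L y) is monotone on [d₁, d]
  set v : ℝ → ℝ := fun y => u y * Real.exp (L * y) with hvdef
  have hexp_der : ∀ x : ℝ, HasDerivAt (fun y : ℝ => Real.exp (L * y)) (Real.exp (L * x) * L) x := by
    intro x
    have h1 : HasDerivAt (fun y : ℝ => L * y) L x := by
      simpa using (hasDerivAt_id x).const_mul L
    exact h1.exp
  have hv_der : ∀ x ∈ Ioo c e, HasDerivAt v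
      ((C * g x - W x / (M₂ x) ^ 2) * Real.exp (L * x) + u x * (Real.exp (L * x) * L)) x :=
    fun x hx => (hu_der x hx).mul (hexp_der x)
  have hvmono : MonotoneOn v (Icc d₁ d) := by
    apply monotoneOn_of_deriv_nonneg (convex_Icc d₁ d)
    · intro x hx
      exact ((hv_der x (hKsubcd hx)).differentiableAt.continuousAt).continuousWithinAt
    · rw [interior_Icc]
      intro x hx
      exact ((hv_der x (hKsubcd ⟨le_of_lt hx.1, le_of_lt hx.2⟩)).differentiableAt).differentiableWithinAt
    · rw [interior_Icc]
      intro x hx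
      have hxce : x ∈ Ioo c e := hKsubcd ⟨le_of_lt hx.1, le_of_lt hx.2⟩
      rw [(hv_der x hxce).deriv]
      have hk := hkey x hx
      have he := Real.exp_pos (L * x)
      nlinarith [mul_nonneg hk he.le]
  have hvd : v d = 0 := by
    simp [hvdef, hudef, hWd0, hrd]
  have hvd₁ : 0 < v d₁ := by
    have hu1 : 0 < u d₁ := by
      rw [hudef]
      simp only
      have := hWnn d₁ ⟨le_refl d₁, hd₁led⟩
      linarith
    exact mul_pos hu1 (Real.exp_pos _)
  have := hvmono ⟨le_refl d₁, hd₁led⟩ ⟨hd₁led, le_refl d⟩ hd₁led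
  rw [hvd] at this
  linarith
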